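/- Under mechanism ONE with a single query, the prediction map f* defined by f*(z) = E_{f_z}[p | z] (the average CTR among the highest-bid ads with raw prediction z), restricted so that f*(z') = 0 except at z* = argmax_z b(z)·E_C[p | z, b(z)], is both efficiency-maximizing and self-calibrated: the expected value it achieves equals max_z b(z)·E_C[p | z, b(z)], and the observed average CTR at the served bucket equals the prediction. -/

import Mathlib

open Finset

/-- The ads with raw prediction `z'` achieving the maximal bid among that bucket. -/
noncomputable def topSet {n K : ℕ} (b : Fin n → ℝ) (z : Fin n → Fin K) (z' : Fin K) : Finset (Fin n) :=
  (Finset.univ.filter (fun i => z i = z')).filter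
    (fun i => ∀ j, z j = z' → b j ≤ b i)

/-- `E_C[p | z', b(z')]`: the mean CTR over the highest-bid ads in bucket `z'`. -/
noncomputable def meanTop {n K : ℕ} (p b : Fin n → ℝ) (z : Fin n → Fin K) (z' : Fin K) : ℝ :=
  (∑ i ∈ topSet b z z', p i) / ((topSet b z z').card : ℝ)

/-- `b(z') * E_C[p | z', b(z')]`: the expected value obtained when bucket `z'` wins. -/
noncomputable def bucketValue {n K : ℕ} (p b : Fin n → ℝ) (z : Fin n → Fin K) (z' : Fin K) : ℝ :=
  (∑ i ∈ topSet b z z', b i * p i) / ((topSet b z z').card : ℝ)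

/-- Mechanism ONE with a single query.  Let `zstar` be a bucket maximizing
`b(z) * E_C[p | z, b(z)]` over all nonempty buckets, with positive maximal value, and
let `fstar` be the prediction map with `fstar zstar = E_{f_{zstar}}[p | zstar]`
(the mean CTR of the highest-bid ads in bucket `zstar`) and `fstar z' = 0` elsewhere.
Then the set of ads that can show under `fstar` (the ads maximizing `b i * fstar (z i)`,
ties broken uniformly) is exactly the set of highest-bid ads of bucket `zstar`; the
expected value achieved equals `max_z b(z) * E_C[p | z, b(z)]`; and the observed average
CTR at the served bucket equals the prediction, so `fstar` is efficiency-maximizing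
and self-calibrated. -/
theorem one_single_query_nice (n K : ℕ) (p b : Fin n → ℝ) (z : Fin n → Fin K)
    (hp : ∀ i, 0 ≤ p i ∧ p i ≤ 1) (hb : ∀ i, 0 < b i)
    (zstar : Fin K)
    (hmax : IsGreatest
      {v : ℝ | ∃ z' : Fin K, (Finset.univ.filter (fun i => z i = z')).Nonempty ∧
        v = bucketValue p b z z'}
      (bucketValue p b z zstar))
    (hpos : 0 < bucketValue p b z zstar)
    (fstar : Fin K → ℝ)
    (hfstar : fstar zstar = meanTop p b z zstar ∧ ∀ z' ≠ zstar, fstar z' = 0) :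
    (Finset.univ.filter (fun i => ∀ j, b j * fstar (z j) ≤ b i * fstar (z i))
        = topSet b z zstar) ∧
    ((∑ i ∈ Finset.univ.filter (fun i => ∀ j, b j * fstar (z j) ≤ b i * fstar (z i)),
        b i * p i) /
      ((Finset.univ.filter (fun i => ∀ j, b j * fstar (z j) ≤ b i * fstar (z i))).card : ℝ)
        = bucketValue p b z zstar) ∧
    ((∑ i ∈ topSet b z zstar, p i) / ((topSet b z zstar).card : ℝ) = fstar zstar) := by
  obtain ⟨hf1, hf2⟩ := hfstar
  have hne : (topSet b z zstar).Nonempty := by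
    by_contra h
    rw [Finset.not_nonempty_iff_eq_empty] at h
    have : bucketValue p b z zstar = 0 := by
      unfold bucketValue; rw [h]; simp
    linarith
  obtain ⟨i0, hi0⟩ := hne
  have hi0' := hi0
  unfold topSet at hi0'
  simp only [Finset.mem_filter, Finset.mem_univ, true_and] at hi0'
  obtain ⟨hzi0, hmax0⟩ := hi0'
  have hbconst : ∀ i ∈ topSet b z zstar, b i = b i0 := by
    intro i hi
    unfold topSet at hi
    simp only [Finset.mem_filter, Finset.mem_univ, true_and] at hi
    exact le_antisymm (hmax0 i hi.1) (hi.2 i0 hzi0)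
  have hsum : ∑ i ∈ topSet b z zstar, b i * p i
      = b i0 * ∑ i ∈ topSet b z zstar, p i := by
    rw [Finset.mul_sum]
    exact Finset.sum_congr rfl (fun i hi => by rw [hbconst i hi])
  have hbv : bucketValue p b z zstar = b i0 * meanTop p b z zstar := by
    unfold bucketValue meanTop
    rw [hsum, mul_div_assoc]
  have hmt : 0 < meanTop p b z zstar := by
    nlinarith [hb i0, hpos, hbv]
  have hval : ∀ i, z i = zstar → (∀ j, z j = zstar → b j ≤ b i) →
      ∀ j, b j * fstar (z j) ≤ b i * fstar (z i) := by
    intro i hzi hmx j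
    by_cases hz : z j = zstar
    · rw [hz, hf1, hzi, hf1]
      exact mul_le_mul_of_nonneg_right (hmx j hz) hmt.le
    · rw [hf2 _ hz, mul_zero, hzi, hf1]
      exact mul_nonneg (hb i).le hmt.le
  have hset : Finset.univ.filter (fun i => ∀ j, b j * fstar (z j) ≤ b i * fstar (z i))
      = topSet b z zstar := by
    ext i
    simp only [Finset.mem_filter, Finset.mem_univ, true_and, topSet]
    constructor
    · intro h
      have h0 := h i0
      rw [hzi0, hf1] at h0
      by_cases hz : z i = zstar
      · refine ⟨hz, fun j hj => ?_⟩
        rw [hz, hf1] at h0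
        have hb0i : b i0 ≤ b i := le_of_mul_le_mul_right h0 hmt
        exact (hmax0 j hj).trans hb0i
      · rw [hf2 _ hz, mul_zero] at h0
        nlinarith [hb i0]
    · rintro ⟨h1, h2⟩
      exact hval i h1 h2
  refine ⟨hset, ?_, ?_⟩
  · rw [hset]; rfl
  · rw [hf1]; rfl
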